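/- Let a > c and d > b (coordination game) and let δ satisfy 0 < δ < (d−b)/(a+d−b−c). Let φ : ℝ → ℝ be continuously differentiable with φ(x) < 0 for all x ∈ [0,δ) and φ(x) > 0 for all x ∈ (δ,1]. Then every solution (x, g) of the innovation-gain controlled replicator equation with x(0) ∈ [0,1) and g(0) > 0 satisfies x(t) → 0 and g(t) → 0 as t → ∞. -/

import Mathlib

open Set Filter

/-- Exponential representation of solutions of a scalar linear ODE on `[0, ∞)`. -/
private lemma expRep {f ψ : ℝ → ℝ} (hψ : Continuous ψ)
    (hf : ∀ t : ℝ, 0 ≤ t → HasDerivAt f (ψ t * f t) t) :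
    ∀ t : ℝ, 0 ≤ t → f t = f 0 * Real.exp (∫ u in (0:ℝ)..t, ψ u) := by
  set F : ℝ → ℝ := fun t => ∫ u in (0:ℝ)..t, ψ u with hF
  have hFd : ∀ t : ℝ, HasDerivAt F (ψ t) t := fun t =>
    intervalIntegral.integral_hasDerivAt_right (hψ.intervalIntegrable _ _)
      (hψ.stronglyMeasurableAtFilter _ _) hψ.continuousAt
  have key : ∀ t : ℝ, 0 ≤ t → f t * Real.exp (-F t) = f 0 := by
    intro t ht
    have hcont : ContinuousOn (fun u => f u * Real.exp (-F u)) (Icc 0 t) := fun u hu =>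
      ((hf u hu.1).continuousAt.mul ((hFd u).neg.exp.continuousAt)).continuousWithinAt
    have hderiv : ∀ u ∈ Ico (0:ℝ) t,
        HasDerivWithinAt (fun u => f u * Real.exp (-F u)) 0 (Ici u) u := by
      intro u hu
      have h1 : HasDerivAt (fun u => f u * Real.exp (-F u))
          (ψ u * f u * Real.exp (-F u) + f u * (Real.exp (-F u) * -ψ u)) u :=
        (hf u hu.1).mul ((hFd u).neg.exp)
      have h2 : ψ u * f u * Real.exp (-F u) + f u * (Real.exp (-F u) * -ψ u) = 0 := by ring
      rw [h2] at h1
      exact h1.hasDerivWithinAt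
    have h := constant_of_has_deriv_right_zero hcont hderiv t ⟨ht, le_refl t⟩
    simpa [hF] using h
  intro t ht
  have h := key t ht
  have h2 : f t = f t * Real.exp (-F t) * Real.exp (F t) := by
    rw [mul_assoc, ← Real.exp_add]; simp
  rw [h2, h]

/-- Monotonicity on `[T, ∞)` from a nonneg derivative. -/
private lemma monoOn {f f' : ℝ → ℝ} {T : ℝ}
    (hd : ∀ t, T ≤ t → HasDerivAt f (f' t) t) (h0 : ∀ t, T ≤ t → 0 ≤ f' t) :
    MonotoneOn f (Ici T) := by
  apply monotoneOn_of_deriv_nonneg (convex_Ici T)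
  · exact fun u hu => (hd u hu).continuousAt.continuousWithinAt
  · intro u hu
    rw [interior_Ici] at hu
    exact (hd u hu.le).differentiableAt.differentiableWithinAt
  · intro u hu
    rw [interior_Ici] at hu
    rw [(hd u hu.le).deriv]
    exact h0 u hu.le

/-- Antitonicity on `[T, ∞)` from a nonpos derivative. -/
private lemma antiOn {f f' : ℝ → ℝ} {T : ℝ}
    (hd : ∀ t, T ≤ t → HasDerivAt f (f' t) t) (h0 : ∀ t, T ≤ t → f' t ≤ 0) :
    AntitoneOn f (Ici T) := by
  apply antitoneOn_of_deriv_nonpos (convex_Ici T)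
  · exact fun u hu => (hd u hu).continuousAt.continuousWithinAt
  · intro u hu
    rw [interior_Ici] at hu
    exact (hd u hu.le).differentiableAt.differentiableWithinAt
  · intro u hu
    rw [interior_Ici] at hu
    rw [(hd u hu.le).deriv]
    exact h0 u hu.le

/-- Linear decay estimate from a derivative bound. -/
private lemma decayAux {f f' : ℝ → ℝ} {T η : ℝ}
    (hd : ∀ t, T ≤ t → HasDerivAt f (f' t) t) (h0 : ∀ t, T ≤ t → f' t ≤ -η) :
    ∀ t, T ≤ t → f t ≤ f T - η * (t - T) := by
  have hanti : AntitoneOn (fun t => f t + η * t) (Ici T) := by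
    apply antiOn (f' := fun t => f' t + η)
    · intro t ht
      have h := (hd t ht).add ((hasDerivAt_id' t).const_mul η)
      rw [mul_one] at h
      exact h
    · intro t ht
      have := h0 t ht
      linarith
  intro t ht
  have := hanti (self_mem_Ici) (mem_Ici.2 ht) ht
  simp only at this
  linarith

/-- Trap lemma: if the derivative is negative whenever the value lies in `[r, r']`,
then the sublevel set `{f ≤ r}` is forward invariant. -/
private lemma trapAux {f : ℝ → ℝ} {T r r' : ℝ} (hrr' : r < r')
    (hcont : ∀ t, T ≤ t → ContinuousAt f t)
    (hderiv : ∀ t, T ≤ t → r ≤ f t → f t ≤ r' → deriv f t < 0)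
    (hfT : f T ≤ r) : ∀ t, T ≤ t → f t ≤ r := by
  intro t1 ht1
  by_contra hgt
  push_neg at hgt
  have hTt1 : T < t1 := by
    rcases eq_or_lt_of_le ht1 with h | h
    · exact absurd hfT (by rw [h]; exact not_le.2 hgt)
    · exact h
  have hcontOn : ContinuousOn f (Icc T t1) := fun u hu => (hcont u hu.1).continuousWithinAt
  set A : Set ℝ := {s | s ∈ Icc T t1 ∧ f s ≤ r} with hA
  have hAeq : A = Icc T t1 ∩ f ⁻¹' (Iic r) := by ext v; simp [hA, and_comm]
  have hAclosed : IsClosed A := by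
    rw [hAeq]; exact hcontOn.preimage_isClosed_of_isClosed isClosed_Icc isClosed_Iic
  have hAne : A.Nonempty := ⟨T, ⟨left_mem_Icc.2 ht1, hfT⟩⟩
  have hAbdd : BddAbove A := ⟨t1, fun v hv => hv.1.2⟩
  set u := sSup A with hu
  have huA : u ∈ A := hAclosed.csSup_mem hAne hAbdd
  have hTu : T ≤ u := huA.1.1
  have hut1 : u < t1 := lt_of_le_of_ne huA.1.2 (fun h => absurd huA.2 (by rw [h]; exact not_le.2 hgt))
  have hmid : ∀ v, u < v → v ≤ t1 → r < f v := by
    intro v hv hv1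
    by_contra hc
    push_neg at hc
    have : v ∈ A := ⟨⟨le_trans hTu hv.le, hv1⟩, hc⟩
    exact absurd (le_csSup hAbdd this) (not_le.2 hv)
  have hup : ∀ v ∈ Icc u t1, f v < r' := by
    by_contra hc
    push_neg at hc
    obtain ⟨v0, hv0, hv0'⟩ := hc
    set B : Set ℝ := {v | v ∈ Icc u t1 ∧ r' ≤ f v} with hB
    have hBeq : B = Icc u t1 ∩ f ⁻¹' (Ici r') := by ext v; simp [hB]
    have hBclosed : IsClosed B := by
      rw [hBeq]
      exact (hcontOn.mono (Icc_subset_Icc hTu le_rfl)).preimage_isClosed_of_isClosed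
        isClosed_Icc isClosed_Ici
    have hBne : B.Nonempty := ⟨v0, hv0, hv0'⟩
    have hBbdd : BddBelow B := ⟨u, fun v hv => hv.1.1⟩
    set w := sInf B with hw
    have hwB : w ∈ B := hBclosed.csInf_mem hBne hBbdd
    have huw : u < w := lt_of_le_of_ne hwB.1.1 (fun h => by
      have h2 := hwB.2; rw [← h] at h2; linarith [huA.2])
    have hlow : ∀ v, u ≤ v → v < w → f v < r' := by
      intro v hv hvw
      by_contra hc2
      push_neg at hc2
      have : v ∈ B := ⟨⟨hv, le_trans hvw.le hwB.1.2⟩, hc2⟩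
      exact absurd (csInf_le hBbdd this) (not_le.2 hvw)
    have hanti : StrictAntiOn f (Icc u w) := by
      apply strictAntiOn_of_deriv_neg (convex_Icc u w)
        (hcontOn.mono (Icc_subset_Icc hTu hwB.1.2))
      intro v hv
      rw [interior_Icc] at hv
      exact hderiv v (le_trans hTu hv.1.le) (hmid v hv.1 (le_trans hv.2.le hwB.1.2)).le
        (hlow v hv.1.le hv.2).le
    have := hanti (left_mem_Icc.2 huw.le) (right_mem_Icc.2 huw.le) huw
    have h2 := hwB.2
    have h3 := huA.2
    linarith
  have hanti2 : StrictAntiOn f (Icc u t1) := by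
    apply strictAntiOn_of_deriv_neg (convex_Icc u t1) (hcontOn.mono (Icc_subset_Icc hTu le_rfl))
    intro v hv
    rw [interior_Icc] at hv
    exact hderiv v (le_trans hTu hv.1.le) (hmid v hv.1 hv.2.le).le
      (hup v ⟨hv.1.le, hv.2.le⟩).le
  have := hanti2 (left_mem_Icc.2 hut1.le) (right_mem_Icc.2 hut1.le) hut1
  have h3 := huA.2
  linarith

/-- `(x, g)` is a solution of the innovation-gain controlled replicator equation
(control matrix `G⁽³⁾`): `ẋ = x(1−x)((a+d−b−c)x + b − d − g·x)`, `ġ = φ(x) g`. -/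
def IsInnovationSolution (a b c d : ℝ) (φ : ℝ → ℝ) (x g : ℝ → ℝ) : Prop :=
  ∀ t : ℝ, 0 ≤ t →
    HasDerivAt x
      (x t * (1 - x t) * ((a + d - b - c) * x t + (b - d) - g t * x t)) t ∧
    HasDerivAt g (φ (x t) * g t) t

/-- Consensus reaching via the innovation-gain controller in a coordination game. -/
theorem consensus_reaching_innovation (a b c d δ : ℝ) (hac : a > c) (hdb : d > b)
    (hδ0 : 0 < δ) (hδ : δ < (d - b) / (a + d - b - c))
    (φ : ℝ → ℝ) (hφ : ContDiff ℝ 1 φ)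
    (h1 : ∀ y : ℝ, 0 ≤ y → y < δ → φ y < 0)
    (h2 : ∀ y : ℝ, δ < y → y ≤ 1 → 0 < φ y)
    (x g : ℝ → ℝ) (hsol : IsInnovationSolution a b c d φ x g)
    (hx0 : x 0 ∈ Set.Ico (0 : ℝ) 1) (hg0 : 0 < g 0) :
    Filter.Tendsto x Filter.atTop (nhds 0) ∧
    Filter.Tendsto g Filter.atTop (nhds 0) := by
  obtain ⟨hx00, hx01⟩ := hx0
  have hφc : Continuous φ := hφ.continuous
  obtain ⟨s, hs_def⟩ : ∃ s : ℝ, s = a + d - b - c := ⟨_, rfl⟩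
  obtain ⟨m, hm_def⟩ : ∃ m : ℝ, m = d - b := ⟨_, rfl⟩
  have hs : 0 < s := by simp only [hs_def]; linarith
  have hm : 0 < m := by simp only [hm_def]; linarith
  have hms : m < s := by simp only [hs_def, hm_def]; linarith
  obtain ⟨xs, hxs_def⟩ : ∃ xs : ℝ, xs = m / s := ⟨_, rfl⟩
  have hxs0 : 0 < xs := hxs_def ▸ div_pos hm hs
  have hxs1 : xs < 1 := hxs_def ▸ (div_lt_one hs).2 hms
  have hδxs : δ < xs := by rw [hxs_def, hm_def, hs_def]; exact hδ
  have hsxs : s * xs = m := by rw [hxs_def]; exact mul_div_cancel₀ _ (ne_of_gt hs)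
  -- derivatives in convenient form
  have hxd : ∀ t : ℝ, 0 ≤ t →
      HasDerivAt x (x t * (1 - x t) * (s * x t - m - g t * x t)) t := by
    intro t ht
    have h := (hsol t ht).1
    have e : x t * (1 - x t) * ((a + d - b - c) * x t + (b - d) - g t * x t)
        = x t * (1 - x t) * (s * x t - m - g t * x t) := by
      simp only [hs_def, hm_def]; ring
    rwa [e] at h
  have hgd : ∀ t : ℝ, 0 ≤ t → HasDerivAt g (φ (x t) * g t) t := fun t ht => (hsol t ht).2
  -- continuity and global continuous extensions
  have hxc : ∀ t : ℝ, 0 ≤ t → ContinuousAt x t := fun t ht => (hxd t ht).continuousAt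
  have hgc : ∀ t : ℝ, 0 ≤ t → ContinuousAt g t := fun t ht => (hgd t ht).continuousAt
  have hmaxc : Continuous (fun t : ℝ => max t 0) := continuous_id.max continuous_const
  obtain ⟨X, hX_def⟩ : ∃ X : ℝ → ℝ, X = fun t => x (max t 0) := ⟨_, rfl⟩
  obtain ⟨G, hG_def⟩ : ∃ G : ℝ → ℝ, G = fun t => g (max t 0) := ⟨_, rfl⟩
  have hXc : Continuous X := by
    rw [hX_def, continuous_iff_continuousAt]
    intro t
    exact ContinuousAt.comp (g := x) (f := fun t : ℝ => max t 0)
      (hxc _ (le_max_right t 0)) hmaxc.continuousAt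
  have hGc : Continuous G := by
    rw [hG_def, continuous_iff_continuousAt]
    intro t
    exact ContinuousAt.comp (g := g) (f := fun t : ℝ => max t 0)
      (hgc _ (le_max_right t 0)) hmaxc.continuousAt
  have hXeq : ∀ t : ℝ, 0 ≤ t → X t = x t := by
    intro t ht
    rw [hX_def]; simp [max_eq_left ht]
  have hGeq : ∀ t : ℝ, 0 ≤ t → G t = g t := by
    intro t ht
    rw [hG_def]; simp [max_eq_left ht]
  -- positivity of g
  have hgode : ∀ t : ℝ, 0 ≤ t → HasDerivAt g ((fun t => φ (X t)) t * g t) t := by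
    intro t ht
    simp only [hXeq t ht]
    exact hgd t ht
  have hgrep := expRep (hφc.comp hXc) hgode
  have hgpos : ∀ t : ℝ, 0 ≤ t → 0 < g t := by
    intro t ht
    rw [hgrep t ht]
    exact mul_pos hg0 (Real.exp_pos _)
  -- nonnegativity of x
  have hxode : ∀ t : ℝ, 0 ≤ t →
      HasDerivAt x ((fun t => (1 - X t) * (s * X t - m - G t * X t)) t * x t) t := by
    intro t ht
    have h := hxd t ht
    have e : x t * (1 - x t) * (s * x t - m - g t * x t)
        = (1 - X t) * (s * X t - m - G t * X t) * x t := by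
      rw [hXeq t ht, hGeq t ht]; ring
    rwa [e] at h
  have hxrep := expRep (by fun_prop) hxode
  have hxnn : ∀ t : ℝ, 0 ≤ t → 0 ≤ x t := by
    intro t ht
    rw [hxrep t ht]
    exact mul_nonneg hx00 (Real.exp_pos _).le
  -- x < 1
  have hwode : ∀ t : ℝ, 0 ≤ t → HasDerivAt (fun t => 1 - x t)
      ((fun t => -(X t * (s * X t - m - G t * X t))) t * (1 - x t)) t := by
    intro t ht
    have h := (hxd t ht).const_sub 1
    have e : -(x t * (1 - x t) * (s * x t - m - g t * x t))
        = -(X t * (s * X t - m - G t * X t)) * (1 - x t) := by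
      rw [hXeq t ht, hGeq t ht]; ring
    rwa [e] at h
  have hwrep := expRep (by fun_prop) hwode
  have hx1 : ∀ t : ℝ, 0 ≤ t → x t < 1 := by
    intro t ht
    have h := hwrep t ht
    nlinarith [Real.exp_pos (∫ u in (0:ℝ)..t, -(X u * (s * X u - m - G u * X u)))]
  -- Step 1: there is some time where x is below xs
  have hdrop : ∃ T : ℝ, 0 ≤ T ∧ x T < xs := by
    by_contra hcon
    push_neg at hcon
    -- φ has a positive minimum ε₁ on [xs, 1]
    obtain ⟨z, hz, hzmin⟩ := isCompact_Icc.exists_isMinOn (nonempty_Icc.2 hxs1.le)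
      (hφc.continuousOn (s := Set.Icc xs 1))
    obtain ⟨ε₁, hε₁⟩ : ∃ e : ℝ, e = φ z := ⟨_, rfl⟩
    have hε₁0 : 0 < ε₁ := hε₁ ▸ h2 z (lt_of_lt_of_le hδxs hz.1) hz.2
    have hφlb : ∀ t : ℝ, 0 ≤ t → ε₁ ≤ φ (x t) := fun t ht =>
      hε₁ ▸ hzmin ⟨hcon t ht, (hx1 t ht).le⟩
    -- exponential growth of g : g t ≥ g 0 * exp (ε₁ t)
    have hqmono : MonotoneOn (fun t => g t * Real.exp (-(ε₁ * t))) (Set.Ici 0) := by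
      apply monoOn (f' := fun t =>
        φ (x t) * g t * Real.exp (-(ε₁ * t)) + g t * (Real.exp (-(ε₁ * t)) * -ε₁))
      · intro t ht
        have h0 : HasDerivAt (fun t : ℝ => -(ε₁ * t)) (-ε₁) t := by
          have h := ((hasDerivAt_id' t).const_mul ε₁).neg
          rw [mul_one] at h
          exact h
        exact (hgd t ht).mul h0.exp
      · intro t ht
        have e : φ (x t) * g t * Real.exp (-(ε₁ * t)) + g t * (Real.exp (-(ε₁ * t)) * -ε₁)
            = g t * Real.exp (-(ε₁ * t)) * (φ (x t) - ε₁) := by ring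
        rw [e]
        exact mul_nonneg (mul_nonneg (hgpos t ht).le (Real.exp_pos _).le)
          (sub_nonneg.2 (hφlb t ht))
    have hglb : ∀ t : ℝ, 0 ≤ t → g 0 * Real.exp (ε₁ * t) ≤ g t := by
      intro t ht
      have h := hqmono Set.self_mem_Ici (Set.mem_Ici.2 ht) ht
      simp only [mul_zero, neg_zero, Real.exp_zero, mul_one] at h
      have h2' := mul_le_mul_of_nonneg_right h (Real.exp_pos (ε₁ * t)).le
      rw [mul_assoc, ← Real.exp_add] at h2'
      simpa using h2'
    -- a large time T beyond which g ≥ G₀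
    obtain ⟨G₀, hG₀_def⟩ : ∃ v : ℝ, v = (s + (a - c) + 1) / xs := ⟨_, rfl⟩
    have hG₀pos : 0 < G₀ := by
      rw [hG₀_def]
      apply div_pos _ hxs0
      rw [hs_def]; linarith
    have hG₀xs : G₀ * xs = s + (a - c) + 1 := by
      rw [hG₀_def]; exact div_mul_cancel₀ _ (ne_of_gt hxs0)
    obtain ⟨T, hT_def⟩ : ∃ v : ℝ, v = max 0 (Real.log (G₀ / g 0) / ε₁) := ⟨_, rfl⟩
    have hT0 : 0 ≤ T := hT_def ▸ le_max_left _ _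
    have hgT : ∀ t : ℝ, T ≤ t → G₀ ≤ g t := by
      intro t ht
      have ht0 : (0:ℝ) ≤ t := le_trans hT0 ht
      have h1' : Real.log (G₀ / g 0) ≤ ε₁ * t := by
        have ha : Real.log (G₀ / g 0) / ε₁ ≤ t := le_trans (hT_def ▸ le_max_right _ _ : Real.log (G₀ / g 0) / ε₁ ≤ T) ht
        have hb := mul_le_mul_of_nonneg_left ha hε₁0.le
        rw [mul_div_cancel₀ _ (ne_of_gt hε₁0)] at hb
        linarith
      have h2' : G₀ / g 0 ≤ Real.exp (ε₁ * t) := by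
        calc G₀ / g 0 = Real.exp (Real.log (G₀ / g 0)) :=
              (Real.exp_log (div_pos hG₀pos hg0)).symm
          _ ≤ Real.exp (ε₁ * t) := Real.exp_le_exp.2 h1'
      have h3' : G₀ ≤ g 0 * Real.exp (ε₁ * t) := by
        rw [div_le_iff₀ hg0] at h2'
        linarith
      exact le_trans h3' (hglb t ht0)
    -- 1 - x is monotone on [T, ∞)
    have hwmono : MonotoneOn (fun t => 1 - x t) (Set.Ici T) := by
      apply monoOn (f' := fun t => -(x t * (1 - x t) * (s * x t - m - g t * x t)))
      · intro t ht
        exact (hxd t (le_trans hT0 ht)).const_sub 1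
      · intro t ht
        have ht0 : (0:ℝ) ≤ t := le_trans hT0 ht
        have hxt := hcon t ht0
        have hx1t := hx1 t ht0
        have hgt := hgT t ht
        have hgx : G₀ * xs ≤ g t * x t :=
          mul_le_mul hgt hxt hxs0.le (le_trans hG₀pos.le hgt)
        have hsx : s * x t ≤ s := by nlinarith [mul_nonneg hs.le (sub_nonneg.2 (hx1 t ht0).le)]
        have hfac2 : 0 ≤ m + g t * x t - s * x t := by linarith
        have e2 : -(x t * (1 - x t) * (s * x t - m - g t * x t))
            = x t * (1 - x t) * (m + g t * x t - s * x t) := by ring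
        rw [e2]
        exact mul_nonneg (mul_nonneg (hxnn t ht0) (by linarith)) hfac2
    have hβ : 0 < 1 - x T := by linarith [hx1 T hT0]
    obtain ⟨β, hβ_def⟩ : ∃ v : ℝ, v = 1 - x T := ⟨_, rfl⟩
    rw [← hβ_def] at hβ
    obtain ⟨η, hη_def⟩ : ∃ v : ℝ, v = xs * β := ⟨_, rfl⟩
    have hη0 : 0 < η := hη_def ▸ mul_pos hxs0 hβ
    -- x decays linearly past T : contradiction
    have hdec : ∀ t : ℝ, T ≤ t → x t ≤ x T - η * (t - T) := by
      apply decayAux (f' := fun t => x t * (1 - x t) * (s * x t - m - g t * x t))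
      · intro t ht
        exact hxd t (le_trans hT0 ht)
      · intro t ht
        have ht0 : (0:ℝ) ≤ t := le_trans hT0 ht
        have hxt := hcon t ht0
        have hx1t := hx1 t ht0
        have hgt := hgT t ht
        have hgx : G₀ * xs ≤ g t * x t :=
          mul_le_mul hgt hxt hxs0.le (le_trans hG₀pos.le hgt)
        have hsx : s * x t ≤ s := by nlinarith [mul_nonneg hs.le (sub_nonneg.2 hx1t.le)]
        have hfac : s * x t - m - g t * x t ≤ -1 := by linarith
        have hw : β ≤ 1 - x t := by
          have := hwmono Set.self_mem_Ici (Set.mem_Ici.2 ht) ht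
          rw [hβ_def]
          simpa using this
        have hx1x : η ≤ x t * (1 - x t) := by
          rw [hη_def]
          exact mul_le_mul hxt hw hβ.le (by linarith)
        have hA : 0 ≤ x t * (1 - x t) := mul_nonneg (hxnn t ht0) (by linarith)
        calc x t * (1 - x t) * (s * x t - m - g t * x t)
            ≤ x t * (1 - x t) * (-1) := mul_le_mul_of_nonneg_left hfac hA
          _ ≤ -η := by linarith
    have htT : T ≤ T + (x T + 1) / η := by
      have : 0 ≤ (x T + 1) / η := div_nonneg (by linarith [hxnn T hT0]) hη0.le
      linarith
    have hc2 := hdec _ htT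
    have hc3 := hxnn _ (le_trans hT0 htT)
    have he : η * (T + (x T + 1) / η - T) = x T + 1 := by
      have e3 : T + (x T + 1) / η - T = (x T + 1) / η := by ring
      rw [e3]; exact mul_div_cancel₀ _ (ne_of_gt hη0)
    linarith
  obtain ⟨T0, hT00, hxT0⟩ := hdrop
  -- Step 2 : the trap argument below xs
  have trapx : ∀ (T2 r1 : ℝ), 0 ≤ T2 → 0 < r1 → r1 < xs → x T2 ≤ r1 →
      ∀ t, T2 ≤ t → x t ≤ r1 := by
    intro T2 r1 hT2 hr10 hr1xs hxT2
    apply trapAux (r' := (r1 + xs) / 2) (by linarith)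
      (fun t ht => hxc t (le_trans hT2 ht)) _ hxT2
    intro t ht hle hge
    have ht0 : (0:ℝ) ≤ t := le_trans hT2 ht
    rw [(hxd t ht0).deriv]
    have hxtpos : 0 < x t := lt_of_lt_of_le hr10 hle
    have h1x : 0 < 1 - x t := by linarith [hx1 t ht0]
    have hfac : s * x t - m - g t * x t < 0 := by
      have hsx : s * x t ≤ s * ((r1 + xs) / 2) := mul_le_mul_of_nonneg_left hge hs.le
      have hlt : s * ((r1 + xs) / 2) < s * xs := mul_lt_mul_of_pos_left (by linarith) hs
      linarith [mul_pos (hgpos t ht0) hxtpos]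
    exact mul_neg_of_pos_of_neg (mul_pos hxtpos h1x) hfac
  -- Step 3: for any level r < xs the solution eventually stays below r
  have key : ∀ r : ℝ, 0 < r → r < xs → ∃ T1 : ℝ, 0 ≤ T1 ∧ ∀ t, T1 ≤ t → x t ≤ r := by
    intro r hr0 hrxs
    have hstep : ∃ t2, T0 ≤ t2 ∧ x t2 ≤ r := by
      by_contra hcs
      push_neg at hcs
      obtain ⟨r0, hr0_def⟩ : ∃ v : ℝ, v = max (x T0) r := ⟨_, rfl⟩
      have hr0xs : r0 < xs := hr0_def ▸ max_lt hxT0 hrxs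
      have hr00 : 0 < r0 := lt_of_lt_of_le hr0 (hr0_def ▸ le_max_right _ _)
      have hub : ∀ t, T0 ≤ t → x t ≤ r0 :=
        trapx T0 r0 hT00 hr00 hr0xs (hr0_def ▸ le_max_left _ _)
      obtain ⟨η, hη_def⟩ : ∃ v : ℝ, v = r * (1 - r0) * (m - s * r0) := ⟨_, rfl⟩
      have hsr0 : s * (xs - r0) = m - s * r0 := by rw [← hsxs]; ring
      have hmr0 : 0 < m - s * r0 := by
        rw [← hsr0]; exact mul_pos hs (by linarith)
      have hη0 : 0 < η := by
        rw [hη_def]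
        exact mul_pos (mul_pos hr0 (by linarith)) hmr0
      have hdec : ∀ t, T0 ≤ t → x t ≤ x T0 - η * (t - T0) := by
        apply decayAux (f' := fun t => x t * (1 - x t) * (s * x t - m - g t * x t))
        · exact fun t ht => hxd t (le_trans hT00 ht)
        · intro t ht
          have ht0 : (0:ℝ) ≤ t := le_trans hT00 ht
          have ha := hcs t ht
          have hb := hub t ht
          have hc := hx1 t ht0
          have hgx : 0 < g t * x t := mul_pos (hgpos t ht0) (by linarith)
          have hfneg : s * r0 - m < 0 := by linarith
          have hxx : r * (1 - r0) ≤ x t * (1 - x t) :=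
            mul_le_mul ha.le (by linarith) (by linarith) (by linarith)
          have hAx : 0 ≤ x t * (1 - x t) := mul_nonneg (by linarith) (by linarith)
          have hsx : s * x t ≤ s * r0 := mul_le_mul_of_nonneg_left hb hs.le
          calc x t * (1 - x t) * (s * x t - m - g t * x t)
              ≤ x t * (1 - x t) * (s * r0 - m) :=
                mul_le_mul_of_nonneg_left (by linarith) hAx
            _ ≤ r * (1 - r0) * (s * r0 - m) :=
                mul_le_mul_of_nonpos_right hxx hfneg.le
            _ = -η := by rw [hη_def]; ring
      have htT : T0 ≤ T0 + (x T0 + 1) / η := by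
        have : 0 ≤ (x T0 + 1) / η := div_nonneg (by linarith [hxnn T0 hT00]) hη0.le
        linarith
      have hc2 := hdec _ htT
      have hc3 := hxnn _ (le_trans hT00 htT)
      have he : η * (T0 + (x T0 + 1) / η - T0) = x T0 + 1 := by
        have e3 : T0 + (x T0 + 1) / η - T0 = (x T0 + 1) / η := by ring
        rw [e3]; exact mul_div_cancel₀ _ (ne_of_gt hη0)
      linarith
    obtain ⟨t2, ht2, hxt2⟩ := hstep
    exact ⟨t2, le_trans hT00 ht2, trapx t2 r (le_trans hT00 ht2) hr0 hrxs hxt2⟩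
  -- Step 4: x tends to 0
  have hxlim : Filter.Tendsto x Filter.atTop (nhds 0) := by
    rw [Metric.tendsto_atTop]
    intro ε hε
    have hr0 : 0 < min (ε / 2) (xs / 2) := lt_min (by linarith) (by linarith)
    have hrxs : min (ε / 2) (xs / 2) < xs := lt_of_le_of_lt (min_le_right _ _) (by linarith)
    have hrε : min (ε / 2) (xs / 2) < ε := lt_of_le_of_lt (min_le_left _ _) (by linarith)
    obtain ⟨T1, hT1, hbd⟩ := key _ hr0 hrxs
    refine ⟨T1, fun t ht => ?_⟩
    rw [Real.dist_eq, sub_zero, abs_of_nonneg (hxnn t (le_trans hT1 ht))]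
    exact lt_of_le_of_lt (hbd t ht) hrε
  refine ⟨hxlim, ?_⟩
  -- Step 5: g tends to 0
  obtain ⟨T2, hT2, hbd2⟩ := key (δ / 2) (by linarith) (by linarith)
  obtain ⟨z2, hz2, hz2max⟩ := isCompact_Icc.exists_isMaxOn
    (nonempty_Icc.2 (by linarith : (0:ℝ) ≤ δ / 2))
    (hφc.continuousOn (s := Set.Icc 0 (δ / 2)))
  obtain ⟨ε₂, hε₂⟩ : ∃ v : ℝ, v = -φ z2 := ⟨_, rfl⟩
  have hε₂0 : 0 < ε₂ := by
    have := h1 z2 hz2.1 (lt_of_le_of_lt hz2.2 (by linarith))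
    rw [hε₂]
    linarith
  have hφub : ∀ t, T2 ≤ t → φ (x t) ≤ -ε₂ := by
    intro t ht
    have ht0 : (0:ℝ) ≤ t := le_trans hT2 ht
    have h : φ (x t) ≤ φ z2 := hz2max ⟨hxnn t ht0, hbd2 t ht⟩
    rw [hε₂]
    linarith
  have hranti : AntitoneOn (fun t => g t * Real.exp (ε₂ * t)) (Set.Ici T2) := by
    apply antiOn (f' := fun t =>
      φ (x t) * g t * Real.exp (ε₂ * t) + g t * (Real.exp (ε₂ * t) * ε₂))
    · intro t ht
      have h0 : HasDerivAt (fun t : ℝ => ε₂ * t) ε₂ t := by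
        simpa using (hasDerivAt_id t).const_mul ε₂
      exact (hgd t (le_trans hT2 ht)).mul h0.exp
    · intro t ht
      have e : φ (x t) * g t * Real.exp (ε₂ * t) + g t * (Real.exp (ε₂ * t) * ε₂)
          = g t * Real.exp (ε₂ * t) * (φ (x t) + ε₂) := by ring
      rw [e]
      have h3 := hφub t ht
      have h4 := mul_pos (hgpos t (le_trans hT2 ht)) (Real.exp_pos (ε₂ * t))
      nlinarith
  have hub : ∀ t, T2 ≤ t → g t ≤ g T2 * Real.exp (ε₂ * T2) * Real.exp (-(ε₂ * t)) := by
    intro t ht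
    have h := hranti Set.self_mem_Ici (Set.mem_Ici.2 ht) ht
    simp only at h
    have h5 := mul_le_mul_of_nonneg_right h (Real.exp_pos (-(ε₂ * t))).le
    rw [mul_assoc (g t), ← Real.exp_add] at h5
    simpa using h5
  have hupper : Filter.Tendsto (fun t => g T2 * Real.exp (ε₂ * T2) * Real.exp (-(ε₂ * t)))
      Filter.atTop (nhds 0) := by
    have h1' : Filter.Tendsto (fun t : ℝ => ε₂ * t) Filter.atTop Filter.atTop :=
      Filter.Tendsto.const_mul_atTop hε₂0 Filter.tendsto_id
    have h2' : Filter.Tendsto (fun t : ℝ => -(ε₂ * t)) Filter.atTop Filter.atBot :=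
      tendsto_neg_atTop_atBot.comp h1'
    have h3' := Real.tendsto_exp_atBot.comp h2'
    have h4' := h3'.const_mul (g T2 * Real.exp (ε₂ * T2))
    simpa [Function.comp] using h4'
  apply tendsto_of_tendsto_of_tendsto_of_le_of_le' tendsto_const_nhds hupper
  · filter_upwards [Filter.eventually_ge_atTop (0:ℝ)] with t ht
    exact (hgpos t ht).le
  · filter_upwards [Filter.eventually_ge_atTop T2] with t ht
    exact hub t ht
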